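/- Let Ω ⊂ ℝ^r be compact and let d_{SW_1} be the Sliced 1-Wasserstein distance on probability measures on Ω, d_{SW_1}(P,Q) = ∫_{S^{r−1}} ∫_0^1 |F_{θ*_#P}^{[-1]}(t) − F_{θ*_#Q}^{[-1]}(t)| dt dσ(θ). Then the square root √d_{SW_1} is Hilbertian: there exist a real Hilbert space F and a map Φ from the probability measures on Ω into F such that d_{SW_1}(P,Q) = ‖Φ(P) − Φ(Q)‖²_F for all P, Q. -/

import Mathlib

open MeasureTheory
open scoped RealInnerProductSpace

/-- The generalized inverse cumulative distribution function (quantile function) of a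
probability measure `μ` on `ℝ`: `F_μ^{[-1]}(t) = inf {x : F_μ(x) ≥ t}` where
`F_μ(x) = μ((−∞, x])`. -/
noncomputable def invCDF (μ : Measure ℝ) (t : ℝ) : ℝ :=
  sInf {x : ℝ | t ≤ (μ (Set.Iic x)).toReal}

/-- The uniform probability measure on the unit sphere `S^{r-1} ⊂ ℝ^r`
(the normalized surface measure). -/
noncomputable def uniformSphere (r : ℕ) :
    Measure (Metric.sphere (0 : EuclideanSpace ℝ (Fin r)) 1) :=
  ((volume : Measure (EuclideanSpace ℝ (Fin r))).toSphere Set.univ)⁻¹ •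
    (volume : Measure (EuclideanSpace ℝ (Fin r))).toSphere

section aux

open Set Filter Topology ProbabilityTheory
open scoped ENNReal

lemma invCDF_of_nonpos (ν : Measure ℝ) {t : ℝ} (ht : t ≤ 0) : invCDF ν t = 0 := by
  have hset : {x : ℝ | t ≤ (ν (Set.Iic x)).toReal} = Set.univ := by
    ext x
    simp only [Set.mem_setOf_eq, Set.mem_univ, iff_true]
    exact ht.trans ENNReal.toReal_nonneg
  rw [invCDF, hset]
  refine Real.sInf_of_not_bddBelow ?_
  rintro ⟨b, hb⟩
  have := hb (Set.mem_univ (b - 1))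
  linarith

lemma invCDF_of_one_lt (ν : Measure ℝ) [IsProbabilityMeasure ν] {t : ℝ} (ht : 1 < t) :
    invCDF ν t = 0 := by
  have hset : {x : ℝ | t ≤ (ν (Set.Iic x)).toReal} = (∅ : Set ℝ) := by
    ext x
    simp only [Set.mem_setOf_eq, Set.mem_empty_iff_false, iff_false, not_le]
    have h1 : (ν (Set.Iic x)).toReal ≤ 1 := by
      have := ENNReal.toReal_mono (ENNReal.one_ne_top) (prob_le_one (μ := ν) (s := Set.Iic x))
      simpa using this
    linarith
  rw [invCDF, hset, Real.sInf_empty]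

lemma invCDF_props (ν : Measure ℝ) [IsProbabilityMeasure ν] {R : ℝ}
    (hν : ν (Set.Icc (-R) R) = 1) {t : ℝ} (ht : t ∈ Set.Ioc (0 : ℝ) 1) :
    invCDF ν t ∈ Set.Icc (-R) R ∧
      ∀ c : ℝ, (invCDF ν t ≤ c ↔ t ≤ (ν (Set.Iic c)).toReal) := by
  set S := {x : ℝ | t ≤ (ν (Set.Iic x)).toReal} with hS
  have hSc : S = {x : ℝ | t ≤ cdf ν x} := by
    ext x; simp [hS, cdf_eq_real, Measure.real]
  have hcdfR : cdf ν R = 1 := by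
    have h1 : ν (Set.Iic R) = 1 :=
      le_antisymm prob_le_one (hν ▸ measure_mono Set.Icc_subset_Iic_self)
    rw [cdf_eq_real, measureReal_def, h1, ENNReal.toReal_one]
  have hmemR : R ∈ S := by
    rw [hSc]; exact Set.mem_setOf_eq ▸ (hcdfR ▸ ht.2)
  have hlb : ∀ x ∈ S, -R ≤ x := by
    intro x hx
    by_contra hcon
    push_neg at hcon
    have hsub : Set.Iic x ⊆ (Set.Icc (-R) R)ᶜ := by
      intro y hy
      simp only [Set.mem_compl_iff, Set.mem_Icc, not_and, not_le]
      intro h; linarith [Set.mem_Iic.mp hy]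
    have hz : ν (Set.Iic x) = 0 := by
      have h0 : ν ((Set.Icc (-R) R)ᶜ) = 0 := by
        rw [measure_compl measurableSet_Icc (measure_ne_top ν _), hν, measure_univ, tsub_self]
      exact le_antisymm (h0 ▸ measure_mono hsub) zero_le
    have : t ≤ 0 := by simpa [hS, hz] using hx
    linarith [ht.1]
  have hbdd : BddBelow S := ⟨-R, hlb⟩
  have hne : S.Nonempty := ⟨R, hmemR⟩
  constructor
  · exact ⟨le_csInf hne hlb, csInf_le hbdd hmemR⟩
  · intro c
    constructor
    · intro h
      have key : ∀ y, c < y → t ≤ cdf ν y := by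
        intro y hy
        obtain ⟨x, hxS, hxy⟩ := exists_lt_of_csInf_lt hne (lt_of_le_of_lt h hy)
        rw [hSc] at hxS
        exact hxS.trans (monotone_cdf ν hxy.le)
      have htd : Tendsto (cdf ν) (𝓝[>] c) (𝓝 (cdf ν c)) :=
        ((cdf ν).right_continuous c).tendsto.mono_left
          (nhdsWithin_mono c Set.Ioi_subset_Ici_self)
      have : t ≤ cdf ν c :=
        ge_of_tendsto htd (eventually_nhdsWithin_of_forall fun y hy => key y hy)
      rwa [cdf_eq_real] at this
    · intro h
      exact csInf_le hbdd (by simpa [hS] using h)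

lemma indicator_sq_integral {R a b : ℝ} (ha : a ∈ Set.Icc (-R) R) (hb : b ∈ Set.Icc (-R) R) :
    ∫ s in Set.Icc (-R) R,
      ((if s ≤ a then (1 : ℝ) else 0) - (if s ≤ b then (1 : ℝ) else 0)) ^ 2 = |a - b| := by
  wlog hba : b ≤ a generalizing a b
  · have h := this hb ha (le_of_not_ge hba)
    rw [abs_sub_comm] at h
    rw [← h]
    congr 1
    ext s
    ring
  have hind : ∀ s : ℝ,
      ((if s ≤ a then (1 : ℝ) else 0) - (if s ≤ b then (1 : ℝ) else 0)) ^ 2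
        = Set.indicator (Set.Ioc b a) (fun _ => (1 : ℝ)) s := by
    intro s
    rw [Set.indicator_apply]
    by_cases h1 : s ≤ b
    · have h2 : s ≤ a := h1.trans hba
      simp [h1, h2, Set.mem_Ioc, not_lt.mpr h1]
    · by_cases h2 : s ≤ a
      · simp [h1, h2, Set.mem_Ioc, lt_of_not_ge h1]
      · simp [h1, h2, Set.mem_Ioc]
  simp_rw [hind]
  rw [MeasureTheory.integral_indicator measurableSet_Ioc]
  rw [MeasureTheory.setIntegral_const]
  have hsub : Set.Ioc b a ⊆ Set.Icc (-R) R := fun x hx =>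
    ⟨hb.1.trans hx.1.le, hx.2.trans ha.2⟩
  rw [measureReal_restrict_apply measurableSet_Ioc, Set.inter_eq_self_of_subset_left hsub, measureReal_def]
  rw [Real.volume_Ioc, smul_eq_mul, mul_one, ENNReal.toReal_ofReal (sub_nonneg.mpr hba),
    abs_of_nonneg (sub_nonneg.mpr hba)]

end aux

/-- The Sliced 1-Wasserstein distance between probability measures on `ℝ^r`:
`d_{SW₁}(P,Q) = ∫_{S^{r−1}} ∫_0^1 |F_{θ*_#P}^{[-1]}(t) − F_{θ*_#Q}^{[-1]}(t)| dt dσ(θ)`. -/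
noncomputable def slicedW1 {r : ℕ} (P Q : Measure (EuclideanSpace ℝ (Fin r))) : ℝ :=
  ∫ θ : Metric.sphere (0 : EuclideanSpace ℝ (Fin r)) 1,
    (∫ t in Set.Ioc (0 : ℝ) 1,
      |invCDF (P.map fun x => ⟪x, (θ : EuclideanSpace ℝ (Fin r))⟫) t -
        invCDF (Q.map fun x => ⟪x, (θ : EuclideanSpace ℝ (Fin r))⟫) t|) ∂(uniformSphere r)

/-- **The square root of the Sliced 1-Wasserstein distance is Hilbertian.**
Let `Ω ⊂ ℝ^r` be compact.  There exist a real Hilbert space `F` and a map `Φ` from the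
probability measures on `Ω` into `F` such that `d_{SW₁}(P,Q) = ‖Φ(P) − Φ(Q)‖²_F`
(i.e. `√d_{SW₁}(P,Q) = ‖Φ(P) − Φ(Q)‖_F`) for all probability measures `P, Q` on `Ω`. -/
theorem sqrt_slicedW1_hilbertian {r : ℕ} (Ω : Set (EuclideanSpace ℝ (Fin r)))
    (hΩ : IsCompact Ω) :
    ∃ (F : Type) (_ : NormedAddCommGroup F) (_ : InnerProductSpace ℝ F) (_ : CompleteSpace F)
      (Φ : Measure (EuclideanSpace ℝ (Fin r)) → F),
      ∀ P Q : Measure (EuclideanSpace ℝ (Fin r)),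
        IsProbabilityMeasure P → IsProbabilityMeasure Q → P Ω = 1 → Q Ω = 1 →
          slicedW1 P Q = ‖Φ P - Φ Q‖ ^ 2 := by
  classical
  obtain ⟨R₀, hR₀⟩ := hΩ.isBounded.subset_closedBall 0
  set R : ℝ := max R₀ 0 with hRdef
  have hΩR : Ω ⊆ Metric.closedBall 0 R :=
    hR₀.trans (Metric.closedBall_subset_closedBall (le_max_left _ _))
  set σ := uniformSphere r with hσdef
  set ρ : Measure ℝ := volume.restrict (Set.Ioc (0 : ℝ) 1) with hρdef
  set lam : Measure ℝ := volume.restrict (Set.Icc (-R) R) with hlamdef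
  haveI : IsFiniteMeasure ρ := by
    constructor
    rw [hρdef, Measure.restrict_apply_univ, Real.volume_Ioc]
    exact ENNReal.ofReal_lt_top
  haveI : IsFiniteMeasure lam := by
    constructor
    rw [hlamdef, Measure.restrict_apply_univ, Real.volume_Icc]
    exact ENNReal.ofReal_lt_top
  haveI : IsFiniteMeasure σ := by
    constructor
    rw [hσdef, uniformSphere, Measure.smul_apply, smul_eq_mul]
    rcases eq_or_ne ((volume : Measure (EuclideanSpace ℝ (Fin r))).toSphere Set.univ) 0 with h | h
    · rw [h, mul_zero]
      exact ENNReal.zero_lt_top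
    · rw [ENNReal.inv_mul_cancel h (measure_ne_top _ _)]
      exact ENNReal.one_lt_top
  set μ := σ.prod (ρ.prod lam) with hμdef
  have hinnerm : ∀ θ : Metric.sphere (0 : EuclideanSpace ℝ (Fin r)) 1,
      Measurable fun x : EuclideanSpace ℝ (Fin r) => ⟪x, (θ : EuclideanSpace ℝ (Fin r))⟫ :=
    fun θ => (continuous_id.inner continuous_const).measurable
  have hprob : ∀ P : Measure (EuclideanSpace ℝ (Fin r)), IsProbabilityMeasure P →
      ∀ θ : Metric.sphere (0 : EuclideanSpace ℝ (Fin r)) 1,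
      IsProbabilityMeasure (P.map fun x => ⟪x, (θ : EuclideanSpace ℝ (Fin r))⟫) := by
    intro P hP θ
    exact Measure.isProbabilityMeasure_map (hinnerm θ).aemeasurable
  have hIcc : ∀ P : Measure (EuclideanSpace ℝ (Fin r)), IsProbabilityMeasure P → P Ω = 1 →
      ∀ θ : Metric.sphere (0 : EuclideanSpace ℝ (Fin r)) 1,
      (P.map fun x => ⟪x, (θ : EuclideanSpace ℝ (Fin r))⟫) (Set.Icc (-R) R) = 1 := by
    intro P hP hPΩ θ
    haveI := hP
    rw [Measure.map_apply (hinnerm θ) measurableSet_Icc]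
    refine le_antisymm prob_le_one ?_
    rw [← hPΩ]
    refine measure_mono ?_
    intro x hx
    have hx1 : ‖x‖ ≤ R := by
      have := hΩR hx
      rwa [Metric.mem_closedBall, dist_zero_right] at this
    have hθ : ‖(θ : EuclideanSpace ℝ (Fin r))‖ = 1 := by
      have h2 := θ.2
      rwa [mem_sphere_zero_iff_norm] at h2
    have habs : |⟪x, (θ : EuclideanSpace ℝ (Fin r))⟫| ≤ R := by
      calc |⟪x, (θ : EuclideanSpace ℝ (Fin r))⟫|
          ≤ ‖x‖ * ‖(θ : EuclideanSpace ℝ (Fin r))‖ := abs_real_inner_le_norm _ _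
        _ = ‖x‖ := by rw [hθ, mul_one]
        _ ≤ R := hx1
    have := abs_le.mp habs
    exact ⟨this.1, this.2⟩
  have hfprops : ∀ P : Measure (EuclideanSpace ℝ (Fin r)), IsProbabilityMeasure P → P Ω = 1 →
      ∀ θ : Metric.sphere (0 : EuclideanSpace ℝ (Fin r)) 1, ∀ t ∈ Set.Ioc (0 : ℝ) 1,
      invCDF (P.map fun x => ⟪x, (θ : EuclideanSpace ℝ (Fin r))⟫) t ∈ Set.Icc (-R) R := by
    intro P hP hPΩ θ t ht
    haveI := hprob P hP θ
    exact (invCDF_props _ (hIcc P hP hPΩ θ) ht).1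
  have hcdfm : ∀ P : Measure (EuclideanSpace ℝ (Fin r)), IsProbabilityMeasure P → ∀ c : ℝ,
      Measurable fun θ : Metric.sphere (0 : EuclideanSpace ℝ (Fin r)) 1 =>
        ((P.map fun x => ⟪x, (θ : EuclideanSpace ℝ (Fin r))⟫) (Set.Iic c)).toReal := by
    intro P hP c
    haveI := hP
    have hc : Continuous fun q : Metric.sphere (0 : EuclideanSpace ℝ (Fin r)) 1 ×
        EuclideanSpace ℝ (Fin r) => ⟪q.2, (q.1 : EuclideanSpace ℝ (Fin r))⟫ :=
      continuous_snd.inner (continuous_subtype_val.comp continuous_fst)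
    have hT : MeasurableSet {q : Metric.sphere (0 : EuclideanSpace ℝ (Fin r)) 1 ×
        EuclideanSpace ℝ (Fin r) | ⟪q.2, (q.1 : EuclideanSpace ℝ (Fin r))⟫ ≤ c} :=
      measurableSet_le hc.measurable measurable_const
    have h := measurable_measure_prodMk_left (ν := P) hT
    have heq : ∀ θ : Metric.sphere (0 : EuclideanSpace ℝ (Fin r)) 1,
        (P.map fun x => ⟪x, (θ : EuclideanSpace ℝ (Fin r))⟫) (Set.Iic c)
          = P (Prod.mk θ ⁻¹' {q : Metric.sphere (0 : EuclideanSpace ℝ (Fin r)) 1 ×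
              EuclideanSpace ℝ (Fin r) | ⟪q.2, (q.1 : EuclideanSpace ℝ (Fin r))⟫ ≤ c}) := by
      intro θ
      rw [Measure.map_apply (hinnerm θ) measurableSet_Iic]
      rfl
    simp_rw [heq]
    exact h.ennreal_toReal
  have hfm : ∀ P : Measure (EuclideanSpace ℝ (Fin r)), IsProbabilityMeasure P → P Ω = 1 →
      Measurable fun p : Metric.sphere (0 : EuclideanSpace ℝ (Fin r)) 1 × ℝ =>
        invCDF (P.map fun x => ⟪x, (p.1 : EuclideanSpace ℝ (Fin r))⟫) p.2 := by
    intro P hP hPΩ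
    apply measurable_of_Iic
    intro c
    have hset : (fun p : Metric.sphere (0 : EuclideanSpace ℝ (Fin r)) 1 × ℝ =>
          invCDF (P.map fun x => ⟪x, (p.1 : EuclideanSpace ℝ (Fin r))⟫) p.2) ⁻¹' Set.Iic c
        = ((Prod.snd ⁻¹' Set.Ioc (0 : ℝ) 1) ∩
            {p : Metric.sphere (0 : EuclideanSpace ℝ (Fin r)) 1 × ℝ |
              p.2 ≤ ((P.map fun x => ⟪x, (p.1 : EuclideanSpace ℝ (Fin r))⟫) (Set.Iic c)).toReal})
          ∪ ((Prod.snd ⁻¹' Set.Ioc (0 : ℝ) 1)ᶜ ∩ {_p : Metric.sphere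
              (0 : EuclideanSpace ℝ (Fin r)) 1 × ℝ | (0 : ℝ) ≤ c}) := by
      ext p
      haveI := hprob P hP p.1
      simp only [Set.mem_preimage, Set.mem_Iic, Set.mem_union, Set.mem_inter_iff,
        Set.mem_setOf_eq, Set.mem_compl_iff]
      by_cases hp : p.2 ∈ Set.Ioc (0 : ℝ) 1
      · rw [(invCDF_props _ (hIcc P hP hPΩ p.1) hp).2 c]
        simp [hp]
      · have hp' := hp
        rw [Set.mem_Ioc, not_and_or, not_lt, not_le] at hp'
        have h0 : invCDF (P.map fun x => ⟪x, (p.1 : EuclideanSpace ℝ (Fin r))⟫) p.2 = 0 := by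
          rcases hp' with hp' | hp'
          · exact invCDF_of_nonpos _ hp'
          · exact invCDF_of_one_lt _ hp'
        rw [h0]
        simp [hp]
    rw [hset]
    refine ((measurable_snd measurableSet_Ioc).inter ?_).union
      (((measurable_snd measurableSet_Ioc).compl).inter ?_)
    · exact measurableSet_le measurable_snd ((hcdfm P hP c).comp measurable_fst)
    · by_cases h0c : (0 : ℝ) ≤ c
      · simp [h0c]
      · simp [h0c]
  set g : Measure (EuclideanSpace ℝ (Fin r)) →
      Metric.sphere (0 : EuclideanSpace ℝ (Fin r)) 1 × ℝ × ℝ → ℝ := fun P p =>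
    if p.2.2 ≤ invCDF (P.map fun x => ⟪x, (p.1 : EuclideanSpace ℝ (Fin r))⟫) p.2.1 then 1 else 0
    with hgdef
  have hg01 : ∀ P p, g P p = 0 ∨ g P p = 1 := by
    intro P p
    simp only [hgdef]
    split
    · right; rfl
    · left; rfl
  have hgm : ∀ P : Measure (EuclideanSpace ℝ (Fin r)), IsProbabilityMeasure P → P Ω = 1 →
      Measurable (g P) := by
    intro P hP hPΩ
    rw [hgdef]
    refine Measurable.ite ?_ measurable_const measurable_const
    have hm2 : Measurable fun p : Metric.sphere (0 : EuclideanSpace ℝ (Fin r)) 1 × ℝ × ℝ =>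
        invCDF (P.map fun x => ⟪x, (p.1 : EuclideanSpace ℝ (Fin r))⟫) p.2.1 :=
      (hfm P hP hPΩ).comp (measurable_fst.prodMk (measurable_fst.comp measurable_snd))
    exact measurableSet_le (measurable_snd.comp measurable_snd) hm2
  have hmem : ∀ P : Measure (EuclideanSpace ℝ (Fin r)), IsProbabilityMeasure P → P Ω = 1 →
      MemLp (g P) 2 μ := by
    intro P hP hPΩ
    refine MemLp.mono_exponent
      (memLp_top_of_bound (hgm P hP hPΩ).aestronglyMeasurable 1 ?_) le_top
    filter_upwards with p
    rcases hg01 P p with h | h <;> rw [h] <;> norm_num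
  refine ⟨Lp ℝ 2 μ, inferInstance, inferInstance, inferInstance,
    fun P => if h : IsProbabilityMeasure P ∧ P Ω = 1 then (hmem P h.1 h.2).toLp _ else 0, ?_⟩
  intro P Q hP hQ hPΩ hQΩ
  beta_reduce
  rw [dif_pos ⟨hP, hPΩ⟩, dif_pos ⟨hQ, hQΩ⟩]
  have hsub : MemLp (g P - g Q) 2 μ := (hmem P hP hPΩ).sub (hmem Q hQ hQΩ)
  have hnorm : ‖(hmem P hP hPΩ).toLp (g P) - (hmem Q hQ hQΩ).toLp (g Q)‖ ^ 2
      = ∫ p, (g P p - g Q p) ^ 2 ∂μ := by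
    rw [← MemLp.toLp_sub, ← real_inner_self_eq_norm_sq, MeasureTheory.L2.inner_def]
    refine MeasureTheory.integral_congr_ae (hsub.coeFn_toLp.mono fun p hp => ?_)
    beta_reduce
    rw [hp]
    simp [Pi.sub_apply, RCLike.inner_apply, starRingEnd_apply, sq]
  rw [hnorm]
  -- integrability of the squared difference
  have hb4 : ∀ P' Q' : Measure (EuclideanSpace ℝ (Fin r)), ∀ p, ‖(g P' p - g Q' p) ^ 2‖ ≤ 4 := by
    intro P' Q' p
    rw [Real.norm_eq_abs, abs_of_nonneg (sq_nonneg _)]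
    rcases hg01 P' p with h1 | h1 <;> rcases hg01 Q' p with h2 | h2 <;>
      rw [h1, h2] <;> norm_num
  have hInt : MeasureTheory.Integrable (fun p => (g P p - g Q p) ^ 2) μ := by
    refine (MeasureTheory.integrable_const (4 : ℝ)).mono'
      ((((hgm P hP hPΩ).sub (hgm Q hQ hQΩ)).pow_const 2).aestronglyMeasurable) ?_
    exact Filter.Eventually.of_forall (hb4 P Q)
  have hstep : ∫ p, (g P p - g Q p) ^ 2 ∂μ = slicedW1 P Q := by
    rw [hμdef, MeasureTheory.integral_prod _ hInt]
    show (∫ θ, ∫ q : ℝ × ℝ, (g P (θ, q) - g Q (θ, q)) ^ 2 ∂(ρ.prod lam) ∂σ) = _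
    rw [slicedW1, ← hσdef]
    refine MeasureTheory.integral_congr_ae (Filter.Eventually.of_forall fun θ => ?_)
    have hIntθ : MeasureTheory.Integrable
        (fun q : ℝ × ℝ => (g P (θ, q) - g Q (θ, q)) ^ 2) (ρ.prod lam) := by
      refine (MeasureTheory.integrable_const (4 : ℝ)).mono' ?_ ?_
      · exact ((((hgm P hP hPΩ).comp measurable_prodMk_left).sub
          ((hgm Q hQ hQΩ).comp measurable_prodMk_left)).pow_const 2).aestronglyMeasurable
      · exact Filter.Eventually.of_forall fun q => hb4 P Q (θ, q)
    beta_reduce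
    rw [MeasureTheory.integral_prod _ hIntθ]
    rw [hρdef]
    refine MeasureTheory.integral_congr_ae
      ((MeasureTheory.ae_restrict_mem measurableSet_Ioc).mono fun t ht => ?_)
    beta_reduce
    have haP := hfprops P hP hPΩ θ t ht
    have haQ := hfprops Q hQ hQΩ θ t ht
    have := indicator_sq_integral (R := R) haP haQ
    rw [← this, hlamdef]
  rw [hstep]
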